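/- arXiv:0908.3879 — 3 statements merged into one kernel-verified Lean document; each statement's English description precedes it below -/
import Mathlib

section
/- Let x ∈ gl(n, ℂ) be strongly regular, i.e., for each i, the cutoff x_i is a regular element of gl(i, ℂ) and z_{g_i}(x_i) ∩ z_{g_{i+1}}(x_{i+1}) = 0 for 1 ≤ i ≤ n−1 (where centralizers are taken inside gl(n,ℂ) via the standard embeddings). Then for each 1 ≤ i ≤ n−1, the intersection of the group centralizers Z_{G_i}(x_i) ∩ Z_{G_{i+1}}(x_{i+1}) is trivial, where G_k ≅ GL(k, ℂ) is embedded in GL(n, ℂ) as block matrices with identity in the lower right corner. -/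
noncomputable section

open Matrix

/-- The cutoff `x_k`: the upper left `k × k` corner of `x`, viewed in `gl(n,ℂ)`. -/
def cutoff (n k : ℕ) (x : Matrix (Fin n) (Fin n) ℂ) : Matrix (Fin n) (Fin n) ℂ :=
  fun a b => if a.1 < k ∧ b.1 < k then x a b else 0

/-- The subalgebra `g_i ⊂ gl(n,ℂ)` of matrices supported in the upper left `i × i` block. -/
def corner (n i : ℕ) : Submodule ℂ (Matrix (Fin n) (Fin n) ℂ) where
  carrier := {x | ∀ a b : Fin n, ¬(a.1 < i ∧ b.1 < i) → x a b = 0}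
  add_mem' := by
    intro x y hx hy a b h
    simp [Matrix.add_apply, hx a b h, hy a b h]
  zero_mem' := by intro a b h; rfl
  smul_mem' := by
    intro c x hx a b h
    simp [Matrix.smul_apply, hx a b h]

/-- The centralizer of `y` in `gl(n,ℂ)`, as a subspace. -/
def matCentralizer (n : ℕ) (y : Matrix (Fin n) (Fin n) ℂ) :
    Submodule ℂ (Matrix (Fin n) (Fin n) ℂ) :=
  LinearMap.ker (LinearMap.mulLeft ℂ y - LinearMap.mulRight ℂ y)

/-- `z_{g_i}(x_i)`: the centralizer of `x_i` inside `g_i`, viewed in `gl(n,ℂ)`. -/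
def cornerCent (n i : ℕ) (x : Matrix (Fin n) (Fin n) ℂ) :
    Submodule ℂ (Matrix (Fin n) (Fin n) ℂ) :=
  corner n i ⊓ matCentralizer n (cutoff n i x)

/-- Membership in `G_i ⊂ GL(n,ℂ)`: agrees with the identity matrix outside the
upper left `i × i` block. -/
def inGL (n i : ℕ) (g : Matrix (Fin n) (Fin n) ℂ) : Prop :=
  ∀ a b : Fin n, ¬(a.1 < i ∧ b.1 < i) → g a b = (1 : Matrix (Fin n) (Fin n) ℂ) a b

/-- Strong regularity, via the Kostant–Wallach characterization: each cutoff `x_i`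
is regular in `g_i` and consecutive centralizers intersect trivially. -/
def StronglyRegularChar (n : ℕ) (x : Matrix (Fin n) (Fin n) ℂ) : Prop :=
  (∀ i, 1 ≤ i → i ≤ n → Module.finrank ℂ (cornerCent n i x) = i) ∧
  (∀ i, 1 ≤ i → i ≤ n - 1 → cornerCent n i x ⊓ cornerCent n (i + 1) x = ⊥)

/-- If `x` is strongly regular then `Z_{G_i}(x_i) ∩ Z_{G_{i+1}}(x_{i+1})` is trivial. -/
theorem stmt4 (n : ℕ) (x : Matrix (Fin n) (Fin n) ℂ) (hx : StronglyRegularChar n x)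
    (i : ℕ) (h1 : 1 ≤ i) (h2 : i ≤ n - 1)
    (g : (Matrix (Fin n) (Fin n) ℂ)ˣ)
    (hgi : inGL n i (g : Matrix (Fin n) (Fin n) ℂ))
    (hci : (g : Matrix (Fin n) (Fin n) ℂ) * cutoff n i x =
      cutoff n i x * (g : Matrix (Fin n) (Fin n) ℂ))
    (hci1 : (g : Matrix (Fin n) (Fin n) ℂ) * cutoff n (i + 1) x =
      cutoff n (i + 1) x * (g : Matrix (Fin n) (Fin n) ℂ)) :
    g = 1 := by
  set A : Matrix (Fin n) (Fin n) ℂ := (g : Matrix (Fin n) (Fin n) ℂ) - 1 with hA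
  have hAcorner : A ∈ corner n i := by
    intro a b h
    simp [hA, Matrix.sub_apply, hgi a b h]
  have hcent : ∀ (y : Matrix (Fin n) (Fin n) ℂ),
      (g : Matrix (Fin n) (Fin n) ℂ) * y = y * (g : Matrix (Fin n) (Fin n) ℂ) →
      A ∈ matCentralizer n y := by
    intro y hy
    simp only [matCentralizer, LinearMap.mem_ker, LinearMap.sub_apply,
      LinearMap.mulLeft_apply, LinearMap.mulRight_apply]
    simp only [hA, mul_sub, sub_mul, one_mul, mul_one, hy]
    abel
  have hAi : A ∈ cornerCent n i x := ⟨hAcorner, hcent _ hci⟩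
  have hAi1 : A ∈ cornerCent n (i + 1) x := by
    refine ⟨fun a b h => hAcorner a b ?_, hcent _ hci1⟩
    intro ⟨ha, hb⟩
    exact h ⟨ha.trans (Nat.lt_succ_self i), hb.trans (Nat.lt_succ_self i)⟩
  have hbot := hx.2 i h1 h2
  have hA0 : A = 0 := by
    have : A ∈ cornerCent n i x ⊓ cornerCent n (i + 1) x := ⟨hAi, hAi1⟩
    rw [hbot] at this
    simpa using this
  have : (g : Matrix (Fin n) (Fin n) ℂ) = 1 := by
    have := sub_eq_zero.mp hA0
    simpa using this
  exact Units.ext (by simpa using this)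
end
end

section
/- Let x ∈ gl(n, ℂ) satisfy: x_i regular in gl(i,ℂ) for all i and z_{g_i}(x_i) ∩ z_{g_{i+1}}(x_{i+1}) = 0 for all 1 ≤ i ≤ n−1. Suppose A ∈ Z_{G_i}(x_i) ∩ Z_{G_{i+1}}(x_{i+1}). Then A − I ∈ z_{g_i}(x_i) ∩ z_{g_{i+1}}(x_{i+1}), and hence A = I. -/
noncomputable section

open Matrix

/-- If `x_i` is regular for all `i` and `z_{g_i}(x_i) ∩ z_{g_{i+1}}(x_{i+1}) = 0`,
and `A ∈ Z_{G_i}(x_i) ∩ Z_{G_{i+1}}(x_{i+1})`, then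
`A − I ∈ z_{g_i}(x_i) ∩ z_{g_{i+1}}(x_{i+1})` and hence `A = I`. -/
theorem stmt5 (n : ℕ) (x : Matrix (Fin n) (Fin n) ℂ)
    (hreg : ∀ i, 1 ≤ i → i ≤ n → Module.finrank ℂ (cornerCent n i x) = i)
    (hint : ∀ i, 1 ≤ i → i ≤ n - 1 → cornerCent n i x ⊓ cornerCent n (i + 1) x = ⊥)
    (i : ℕ) (h1 : 1 ≤ i) (h2 : i ≤ n - 1)
    (A : (Matrix (Fin n) (Fin n) ℂ)ˣ)
    (hAi : inGL n i (A : Matrix (Fin n) (Fin n) ℂ))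
    (hci : (A : Matrix (Fin n) (Fin n) ℂ) * cutoff n i x =
      cutoff n i x * (A : Matrix (Fin n) (Fin n) ℂ))
    (hci1 : (A : Matrix (Fin n) (Fin n) ℂ) * cutoff n (i + 1) x =
      cutoff n (i + 1) x * (A : Matrix (Fin n) (Fin n) ℂ)) :
    (A : Matrix (Fin n) (Fin n) ℂ) - 1 ∈ cornerCent n i x ⊓ cornerCent n (i + 1) x ∧
    (A : Matrix (Fin n) (Fin n) ℂ) = 1 := by
  have hmem : (A : Matrix (Fin n) (Fin n) ℂ) - 1 ∈ cornerCent n i x ⊓ cornerCent n (i + 1) x := by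
    refine ⟨⟨?_, ?_⟩, ?_, ?_⟩
    · intro a b h
      simp [Matrix.sub_apply, hAi a b h]
    · show ((LinearMap.mulLeft ℂ (cutoff n i x) - LinearMap.mulRight ℂ (cutoff n i x)))
        ((A : Matrix (Fin n) (Fin n) ℂ) - 1) = 0
      simp only [LinearMap.sub_apply, LinearMap.mulLeft_apply, LinearMap.mulRight_apply,
        mul_sub, sub_mul, mul_one, one_mul, hci]
      abel
    · intro a b h
      have h' : ¬(a.1 < i ∧ b.1 < i) := by
        rintro ⟨ha, hb⟩; exact h ⟨ha.trans (Nat.lt_succ_self i), hb.trans (Nat.lt_succ_self i)⟩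
      simp [Matrix.sub_apply, hAi a b h']
    · show ((LinearMap.mulLeft ℂ (cutoff n (i+1) x) - LinearMap.mulRight ℂ (cutoff n (i+1) x)))
        ((A : Matrix (Fin n) (Fin n) ℂ) - 1) = 0
      simp only [LinearMap.sub_apply, LinearMap.mulLeft_apply, LinearMap.mulRight_apply,
        mul_sub, sub_mul, mul_one, one_mul, hci1]
      abel
  refine ⟨hmem, ?_⟩
  have h0 : (A : Matrix (Fin n) (Fin n) ℂ) - 1 = 0 := by
    have := hint i h1 h2 ▸ hmem
    simpa using this
  exact sub_eq_zero.mp h0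
end
end

section
/- Let x ∈ gl(n,ℂ) be strongly regular, and let h ∈ GL(n,ℂ) lie in the subgroup G_i (upper left i×i block invertible, identity elsewhere) and centralize x_i. Then y = h x h^{-1} is again strongly regular; more precisely, y_k = x_k for k ≤ i and y_k = h x_k h^{-1} for k > i, and the conditions 'y_k regular in g_k for all k' and 'z_{g_k}(y_k) ∩ z_{g_{k+1}}(y_{k+1}) = 0 for all k' hold. -/
noncomputable section

open Matrix

namespace SRaux


abbrev M (n : ℕ) := Matrix (Fin n) (Fin n) ℂ

def E (n k : ℕ) : M n := Matrix.diagonal (fun a => if a.1 < k then 1 else 0)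

lemma cutoff_eq (n k : ℕ) (m : M n) : cutoff n k m = E n k * m * E n k := by
  ext a b
  simp only [E, Matrix.mul_diagonal, Matrix.diagonal_mul, cutoff]
  by_cases ha : a.1 < k <;> by_cases hb : b.1 < k <;> simp [ha, hb]

lemma mul_E_comm {n i k : ℕ} (hik : i ≤ k) {g : M n} (hg : inGL n i g) :
    g * E n k = E n k * g := by
  ext a b
  simp only [E, Matrix.mul_diagonal, Matrix.diagonal_mul]
  by_cases ha : a.1 < k <;> by_cases hb : b.1 < k
  · simp [ha, hb]
  · have h0 : g a b = 0 := by
      rw [hg a b (by rintro ⟨_, hbi⟩; exact hb (lt_of_lt_of_le hbi hik))]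
      exact Matrix.one_apply_ne (by intro e; rw [e] at ha; exact hb ha)
    simp [h0]
  · have h0 : g a b = 0 := by
      rw [hg a b (by rintro ⟨hai, _⟩; exact ha (lt_of_lt_of_le hai hik))]
      exact Matrix.one_apply_ne (by intro e; rw [e] at ha; exact ha hb)
    simp [h0]
  · simp [ha, hb]


lemma cutoff_cutoff {n k l : ℕ} (hkl : k ≤ l) (m : M n) :
    cutoff n k (cutoff n l m) = cutoff n k m := by
  ext a b
  by_cases hab : a.1 < k ∧ b.1 < k
  · simp [cutoff, hab, lt_of_lt_of_le hab.1 hkl, lt_of_lt_of_le hab.2 hkl]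
  · simp [cutoff, hab]

lemma E_mul_E {n : ℕ} (i : ℕ) : E n i * E n i = E n i := by
  ext a b
  rw [E, Matrix.diagonal_mul_diagonal]
  simp only [Matrix.diagonal_apply, Pi.mul_apply]
  by_cases he : a = b
  · subst he; by_cases ha : a.1 < i <;> simp [ha]
  · simp [he]

lemma one_sub_E_apply {n i : ℕ} {a b : Fin n} (hab : ¬(a.1 < i ∧ b.1 < i)) :
    (1 - E n i) a b = (1 : M n) a b := by
  simp only [Matrix.sub_apply, E, Matrix.diagonal_apply]
  by_cases he : a = b
  · subst he
    have : ¬ a.1 < i := fun h => hab ⟨h, h⟩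
    simp [this]
  · simp [he]

lemma one_sub_E_mul {n i : ℕ} {g : M n} (hg : inGL n i g) :
    (1 - E n i) * g = 1 - E n i := by
  ext a b
  simp only [Matrix.sub_mul, Matrix.one_mul, Matrix.sub_apply, E,
    Matrix.diagonal_mul]
  by_cases ha : a.1 < i
  · simp only [ha, if_true, one_mul]
    by_cases he : a = b
    · subst he; simp [Matrix.diagonal_apply, ha]
    · simp [Matrix.diagonal_apply, he]
  · have h1 : g a b = (1 : M n) a b := hg a b (fun hh => ha hh.1)
    simp only [ha, if_false, zero_mul, sub_zero, h1]
    by_cases he : a = b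
    · subst he; simp [Matrix.diagonal_apply, ha]
    · simp [Matrix.diagonal_apply, he]

lemma inGL_inv {n i : ℕ} (h : (M n)ˣ) (hh : inGL n i (↑h : M n)) :
    inGL n i (↑h⁻¹ : M n) := by
  have c1 : (↑h : M n) * E n i = E n i * ↑h := mul_E_comm le_rfl hh
  have c2 : (↑h⁻¹ : M n) * E n i = E n i * ↑h⁻¹ := by
    calc (↑h⁻¹ : M n) * E n i = ↑h⁻¹ * E n i * (↑h * ↑h⁻¹) := by
          rw [Units.mul_inv, mul_one]
      _ = ↑h⁻¹ * (E n i * ↑h) * ↑h⁻¹ := by simp only [mul_assoc]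
      _ = ↑h⁻¹ * (↑h * E n i) * ↑h⁻¹ := by rw [c1]
      _ = (↑h⁻¹ * ↑h) * (E n i * ↑h⁻¹) := by simp only [mul_assoc]
      _ = E n i * ↑h⁻¹ := by rw [Units.inv_mul, one_mul]
  have c3 : (1 - E n i) * (↑h : M n) = 1 - E n i := one_sub_E_mul hh
  have c4 : (1 - E n i) * (↑h⁻¹ : M n) = 1 - E n i := by
    conv_lhs => rw [← c3]
    rw [mul_assoc, Units.mul_inv, mul_one]
  have key : E n i * (↑h⁻¹ : M n) * E n i + (1 - E n i) = (↑h⁻¹ : M n) := by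
    have e5 : E n i * (↑h⁻¹ : M n) * E n i = E n i * ↑h⁻¹ := by
      rw [mul_assoc, c2, ← mul_assoc, E_mul_E]
    have e6 : E n i + (1 - E n i) = 1 := by abel
    rw [e5]
    conv_lhs => rw [← c4]
    rw [← Matrix.add_mul, e6, Matrix.one_mul]
  intro a b hab
  have := (congrFun (congrFun key a) b).symm
  rw [this, Matrix.add_apply, one_sub_E_apply hab, ← cutoff_eq]
  simp [cutoff, hab]

lemma cutoff_mul {n i k : ℕ} (hik : i ≤ k) {g g' : M n}
    (hg : inGL n i g) (hg' : inGL n i g') (m : M n) :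
    cutoff n k (g * m * g') = g * cutoff n k m * g' := by
  rw [cutoff_eq, cutoff_eq]
  calc E n k * (g * m * g') * E n k
      = (E n k * g) * m * (g' * E n k) := by simp only [mul_assoc]
    _ = (g * E n k) * m * (E n k * g') := by
        rw [mul_E_comm hik hg, mul_E_comm hik hg']
    _ = g * (E n k * m * E n k) * g' := by simp only [mul_assoc]

def conjE (n : ℕ) (h : (M n)ˣ) : M n ≃ₗ[ℂ] M n where
  toFun z := ↑h * z * ↑h⁻¹
  invFun z := ↑h⁻¹ * z * ↑h
  map_add' z w := by noncomm_ring
  map_smul' c z := by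
    simp [Matrix.mul_smul, Matrix.smul_mul]
  left_inv z := by
    show (↑h⁻¹ : M n) * (↑h * z * ↑h⁻¹) * ↑h = z
    simp only [← mul_assoc]
    rw [Units.inv_mul, one_mul, mul_assoc, Units.inv_mul, mul_one]
  right_inv z := by
    show (↑h : M n) * (↑h⁻¹ * z * ↑h) * ↑h⁻¹ = z
    simp only [← mul_assoc]
    rw [Units.mul_inv, one_mul, mul_assoc, Units.mul_inv, mul_one]

@[simp] lemma conjE_apply {n : ℕ} (h : (M n)ˣ) (z : M n) :
    conjE n h z = ↑h * z * ↑h⁻¹ := rfl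


lemma mem_matCent {n : ℕ} {m z : M n} :
    z ∈ matCentralizer n m ↔ m * z = z * m := by
  simp only [matCentralizer, LinearMap.mem_ker, LinearMap.sub_apply,
    LinearMap.mulLeft_apply, LinearMap.mulRight_apply, sub_eq_zero]

lemma mem_corner_iff {n k : ℕ} {z : M n} :
    z ∈ corner n k ↔ cutoff n k z = z := by
  constructor
  · intro hz
    ext a b
    by_cases hab : a.1 < k ∧ b.1 < k
    · simp [cutoff, hab]
    · simp [cutoff, hab, hz a b hab]
  · intro hz a b hab
    rw [← hz]
    simp [cutoff, hab]

lemma conj_mem_matCent_iff {n : ℕ} (h : (M n)ˣ) {m z : M n} :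
    ((↑h : M n) * z * (↑h⁻¹ : M n)) ∈ matCentralizer n ((↑h : M n) * m * (↑h⁻¹ : M n)) ↔ z ∈ matCentralizer n m := by
  simp only [mem_matCent]
  have lhs_eq : ∀ a b : M n,
      (↑h * a * ↑h⁻¹) * (↑h * b * ↑h⁻¹) = ↑h * (a * b) * ↑h⁻¹ := by
    intro a b
    simp only [← mul_assoc]
    rw [mul_assoc ((↑h : M n) * a) _ _, Units.inv_mul, mul_one]
  rw [lhs_eq, lhs_eq]
  constructor
  · intro hw
    have := congrArg (fun t => (↑h⁻¹ : M n) * t * (↑h : M n)) hw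
    have cancel : ∀ a : M n, (↑h⁻¹ : M n) * (↑h * a * ↑h⁻¹) * ↑h = a := by
      intro a
      simp only [← mul_assoc]
      rw [Units.inv_mul, one_mul, mul_assoc, Units.inv_mul, mul_one]
    rwa [cancel, cancel] at this
  · intro hw
    rw [hw]

lemma conjE_symm_cancel {n : ℕ} (h : (M n)ˣ) (z : M n) :
    (↑h : M n) * ((↑h⁻¹ : M n) * z * ↑h) * (↑h⁻¹ : M n) = z := by
  simp only [← mul_assoc]
  rw [Units.mul_inv, one_mul, mul_assoc, Units.mul_inv, mul_one]

lemma toLinearMap_conjE_apply {n : ℕ} (h : (M n)ˣ) (w : M n) :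
    (conjE n h).toLinearMap w = (↑h : M n) * w * (↑h⁻¹ : M n) := rfl

lemma map_matCent {n : ℕ} (h : (M n)ˣ) (m : M n) :
    (matCentralizer n m).map (conjE n h).toLinearMap
      = matCentralizer n ((↑h : M n) * m * (↑h⁻¹ : M n)) := by
  ext z
  simp only [Submodule.mem_map, toLinearMap_conjE_apply]
  constructor
  · rintro ⟨w, hw, rfl⟩
    exact (conj_mem_matCent_iff h).mpr hw
  · intro hz
    refine ⟨(↑h⁻¹ : M n) * z * (↑h : M n), ?_, conjE_symm_cancel h z⟩
    rw [← conj_mem_matCent_iff h, conjE_symm_cancel h z]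
    exact hz

lemma map_corner {n i k : ℕ} (hik : i ≤ k) (h : (M n)ˣ)
    (hh : inGL n i (↑h : M n)) :
    (corner n k).map (conjE n h).toLinearMap = corner n k := by
  have hh' := inGL_inv h hh
  ext z
  simp only [Submodule.mem_map, toLinearMap_conjE_apply]
  constructor
  · rintro ⟨w, hw, rfl⟩
    rw [mem_corner_iff] at hw ⊢
    rw [cutoff_mul hik hh hh', hw]
  · intro hz
    refine ⟨(↑h⁻¹ : M n) * z * (↑h : M n), ?_, conjE_symm_cancel h z⟩
    rw [mem_corner_iff] at hz ⊢
    rw [cutoff_mul hik hh' hh, hz]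

lemma map_cornerCent {n i k : ℕ} (hik : i ≤ k) (h : (M n)ˣ)
    (hh : inGL n i (↑h : M n)) (x : Matrix (Fin n) (Fin n) ℂ) :
    (cornerCent n k x).map (conjE n h).toLinearMap
      = corner n k ⊓ matCentralizer n ((↑h : M n) * cutoff n k x * (↑h⁻¹ : M n)) := by
  rw [cornerCent, Submodule.map_inf (conjE n h).toLinearMap (conjE n h).injective,
    map_corner hik h hh, map_matCent h]

end SRaux

open SRaux in

/-- Conjugating a strongly regular `x` by `h ∈ G_i` centralizing `x_i` yields a
strongly regular element `y = h x h⁻¹`, with `y_k = x_k` for `k ≤ i` and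
`y_k = h x_k h⁻¹` for `k > i`. -/
theorem stmt6 (n i : ℕ) (h1 : 1 ≤ i) (hi : i ≤ n)
    (x : Matrix (Fin n) (Fin n) ℂ) (hx : StronglyRegularChar n x)
    (h : (Matrix (Fin n) (Fin n) ℂ)ˣ)
    (hmem : inGL n i (h : Matrix (Fin n) (Fin n) ℂ))
    (hcent : (h : Matrix (Fin n) (Fin n) ℂ) * cutoff n i x =
      cutoff n i x * (h : Matrix (Fin n) (Fin n) ℂ)) :
    ∀ y : Matrix (Fin n) (Fin n) ℂ,
      y = (h : Matrix (Fin n) (Fin n) ℂ) * x * (↑h⁻¹ : Matrix (Fin n) (Fin n) ℂ) →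
      (∀ k, k ≤ i → cutoff n k y = cutoff n k x) ∧
      (∀ k, i < k → k ≤ n → cutoff n k y =
        (h : Matrix (Fin n) (Fin n) ℂ) * cutoff n k x * (↑h⁻¹ : Matrix (Fin n) (Fin n) ℂ)) ∧
      StronglyRegularChar n y := by
  intro y hy
  have hh : inGL n i (↑h : M n) := hmem
  have hh' : inGL n i (↑h⁻¹ : M n) := inGL_inv h hh
  -- cutoff formulas
  have Fge : ∀ k, i ≤ k → cutoff n k y = (↑h : M n) * cutoff n k x * (↑h⁻¹ : M n) := by
    intro k hk
    rw [hy, cutoff_mul hk hh hh']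
  have Fi : cutoff n i y = cutoff n i x := by
    rw [Fge i le_rfl, hcent, mul_assoc, Units.mul_inv, mul_one]
  have Fle : ∀ k, k ≤ i → cutoff n k y = cutoff n k x := by
    intro k hk
    rw [← cutoff_cutoff hk y, Fi, cutoff_cutoff hk x]
  -- submodule formulas
  have Cle : ∀ k, k ≤ i → cornerCent n k y = cornerCent n k x := by
    intro k hk
    rw [cornerCent, cornerCent, Fle k hk]
  have Cge : ∀ k, i ≤ k →
      cornerCent n k y = (cornerCent n k x).map (conjE n h).toLinearMap := by
    intro k hk
    rw [map_cornerCent hk h hh, cornerCent, Fge k hk]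
  refine ⟨Fle, fun k hk _ => Fge k hk.le, ?_, ?_⟩
  · intro k hk1 hkn
    rcases le_total k i with hki | hik
    · rw [Cle k hki]; exact hx.1 k hk1 hkn
    · rw [Cge k hik, LinearEquiv.finrank_map_eq]
      exact hx.1 k hk1 hkn
  · intro k hk1 hkn
    rcases le_total (k + 1) i with hki | hik
    · rw [Cle k (Nat.le_of_succ_le hki), Cle (k + 1) hki]
      exact hx.2 k hk1 hkn
    · rcases le_total k i with hki2 | hik2
      · -- i = k or k + 1 > i ≥ k, so i = k or k ≤ i ≤ k+1
        have hik3 : i ≤ k ∨ i = k + 1 := by omega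
        rcases hik3 with hik3 | hik3
        · rw [Cge k hik3, Cge (k + 1) (by omega),
            ← Submodule.map_inf (conjE n h).toLinearMap (conjE n h).injective, hx.2 k hk1 hkn,
            Submodule.map_bot]
        · -- i = k + 1 : cornerCent (k+1) y = cornerCent (k+1) x via Cle, and k ≤ i
          rw [Cle k (by omega), Cle (k + 1) (by omega)]
          exact hx.2 k hk1 hkn
      · rw [Cge k hik2, Cge (k + 1) (by omega),
          ← Submodule.map_inf (conjE n h).toLinearMap (conjE n h).injective, hx.2 k hk1 hkn,
          Submodule.map_bot]
end
end
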